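/- On the graded mesh t_i = (i/n)^r T with step sizes τ_i = t_{i+1} - t_i, the weighted coefficients are monotone: τ_{j+1}^{-α} a_{j+1,l} > τ_j^{-α} a_{j,l} for all 0 ≤ j ≤ l-2 and l ≥ 2. -/

import Mathlib

noncomputable def gradedCoef (r α : ℝ) (j l : ℕ) : ℝ :=
  (((l : ℝ) ^ r - (j : ℝ) ^ r) / (((j : ℝ) + 1) ^ r - (j : ℝ) ^ r)) ^ (1 - α) -
  (((l : ℝ) ^ r - ((j : ℝ) + 1) ^ r) / (((j : ℝ) + 1) ^ r - (j : ℝ) ^ r)) ^ (1 - α)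

noncomputable def meshPt (r T : ℝ) (n i : ℕ) : ℝ := ((i : ℝ) / (n : ℝ)) ^ r * T

noncomputable def meshStep (r T : ℝ) (n i : ℕ) : ℝ := meshPt r T n (i + 1) - meshPt r T n i

lemma aux_step_coef (α r T : ℝ) (hα1 : α < 1) (hr : 1 ≤ r) (hT : 0 < T)
    (n : ℕ) (hn : 1 ≤ n) (j l : ℕ) (hjl : ((j : ℝ) + 1) ^ r ≤ (l : ℝ) ^ r) :
    meshStep r T n j ^ (-α) * gradedCoef r α j l =
      (T / (n : ℝ) ^ r) ^ (-α) *
        ((((l : ℝ) ^ r - (j : ℝ) ^ r) ^ (1 - α) -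
          ((l : ℝ) ^ r - ((j : ℝ) + 1) ^ r) ^ (1 - α)) /
          (((j : ℝ) + 1) ^ r - (j : ℝ) ^ r)) := by
  have hr0 : (0 : ℝ) < r := by linarith
  have hn0 : (0 : ℝ) < (n : ℝ) := by exact_mod_cast hn
  have hj0 : (0 : ℝ) ≤ (j : ℝ) := Nat.cast_nonneg j
  have hAB : (j : ℝ) ^ r < ((j : ℝ) + 1) ^ r :=
    Real.rpow_lt_rpow hj0 (by linarith) hr0
  have hD : (0 : ℝ) < ((j : ℝ) + 1) ^ r - (j : ℝ) ^ r := by linarith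
  have hLA : (0 : ℝ) ≤ (l : ℝ) ^ r - (j : ℝ) ^ r := by linarith
  have hLB : (0 : ℝ) ≤ (l : ℝ) ^ r - ((j : ℝ) + 1) ^ r := by linarith
  have hstep : meshStep r T n j =
      (((j : ℝ) + 1) ^ r - (j : ℝ) ^ r) * (T / (n : ℝ) ^ r) := by
    unfold meshStep meshPt
    push_cast
    rw [Real.div_rpow (by linarith) hn0.le, Real.div_rpow hj0 hn0.le]
    field_simp
  have hTn : (0 : ℝ) < T / (n : ℝ) ^ r := by positivity
  rw [hstep, Real.mul_rpow hD.le hTn.le]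
  unfold gradedCoef
  rw [Real.div_rpow hLA hD.le, Real.div_rpow hLB hD.le]
  have h2 : (((j : ℝ) + 1) ^ r - (j : ℝ) ^ r) ^ (-α) *
      (((j : ℝ) + 1) ^ r - (j : ℝ) ^ r) =
      (((j : ℝ) + 1) ^ r - (j : ℝ) ^ r) ^ (1 - α) := by
    nth_rewrite 2 [← Real.rpow_one (((j : ℝ) + 1) ^ r - (j : ℝ) ^ r)]
    rw [← Real.rpow_add hD]
    ring_nf
  have hDa : (0 : ℝ) < (((j : ℝ) + 1) ^ r - (j : ℝ) ^ r) ^ (-α) := Real.rpow_pos_of_pos hD _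
  rw [← h2]
  field_simp

theorem weighted_coef_monotone (α r T : ℝ) (hα0 : 0 < α) (hα1 : α < 1) (hr : 1 ≤ r)
    (hT : 0 < T) (n : ℕ) (hn : 1 ≤ n) (l : ℕ) (hl : 2 ≤ l) (hln : l ≤ n)
    (j : ℕ) (hj : j ≤ l - 2) :
    meshStep r T n j ^ (-α) * gradedCoef r α j l <
    meshStep r T n (j + 1) ^ (-α) * gradedCoef r α (j + 1) l := by
  have hr0 : (0 : ℝ) < r := by linarith
  have hj2 : j + 2 ≤ l := by omega
  have hj2' : ((j : ℝ) + 2) ≤ (l : ℝ) := by exact_mod_cast hj2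
  have hj0 : (0 : ℝ) ≤ (j : ℝ) := Nat.cast_nonneg j
  have hAB : (j : ℝ) ^ r < ((j : ℝ) + 1) ^ r :=
    Real.rpow_lt_rpow hj0 (by linarith) hr0
  have hBC : ((j : ℝ) + 1) ^ r < ((j : ℝ) + 2) ^ r :=
    Real.rpow_lt_rpow (by linarith) (by linarith) hr0
  have hCL : ((j : ℝ) + 2) ^ r ≤ (l : ℝ) ^ r :=
    Real.rpow_le_rpow (by linarith) hj2' hr0.le
  have hBL : ((j : ℝ) + 1) ^ r ≤ (l : ℝ) ^ r := by linarith
  have e1 := aux_step_coef α r T hα1 hr hT n hn j l hBL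
  have hcast : ((j + 1 : ℕ) : ℝ) = (j : ℝ) + 1 := by push_cast; ring
  have h12 : ((j : ℝ) + 1 + 1) = (j : ℝ) + 2 := by ring
  have e2 := aux_step_coef α r T hα1 hr hT n hn (j + 1) l
    (by rw [hcast, h12]; exact hCL)
  rw [hcast, h12] at e2
  rw [e1, e2]
  have hconc := Real.strictConcaveOn_rpow (p := 1 - α) (by linarith) (by linarith)
  have hslope := hconc.slope_anti_adjacent
    (x := (l : ℝ) ^ r - ((j : ℝ) + 2) ^ r) (y := (l : ℝ) ^ r - ((j : ℝ) + 1) ^ r)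
    (z := (l : ℝ) ^ r - (j : ℝ) ^ r)
    (by simp only [Set.mem_Ici]; linarith) (by simp only [Set.mem_Ici]; linarith)
    (by linarith) (by linarith)
  have h1 : (l : ℝ) ^ r - (j : ℝ) ^ r - ((l : ℝ) ^ r - ((j : ℝ) + 1) ^ r) =
      ((j : ℝ) + 1) ^ r - (j : ℝ) ^ r := by ring
  have h2 : (l : ℝ) ^ r - ((j : ℝ) + 1) ^ r - ((l : ℝ) ^ r - ((j : ℝ) + 2) ^ r) =
      ((j : ℝ) + 2) ^ r - ((j : ℝ) + 1) ^ r := by ring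
  rw [h1, h2] at hslope
  have hTn : (0 : ℝ) < T / (n : ℝ) ^ r := by positivity
  have hK : (0 : ℝ) < (T / (n : ℝ) ^ r) ^ (-α) := by positivity
  exact mul_lt_mul_of_pos_left hslope hK
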